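/- If p : (X̃, x̃) → (X, x) is a covering map, then p maps the SG subgroup of X̃ onto the SG subgroup of X: p_*(π₁^sg(X̃, x̃)) = π₁^sg(X, x). -/

import Mathlib

open FundamentalGroup

attribute [local instance] Path.Homotopic.setoid

noncomputable section

section CoveringLiftAux

open Set unitInterval

variable {E X : Type*} [TopologicalSpace E] [TopologicalSpace X] {p : E → X}

/-- Lift a continuous map whose range lies in the base set of a trivialization. -/
theorem lift_of_subset_baseSet {A : Type*} [TopologicalSpace A] {F : Type*} [TopologicalSpace F]
    (T : Bundle.Trivialization F p) (f : C(A, X)) (hf : ∀ a, f a ∈ T.baseSet)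
    {e₀ : E} {a₀ : A} (he : p e₀ = f a₀) (hsrc : e₀ ∈ T.source) :
    ∃ g : C(A, E), (∀ a, p (g a) = f a) ∧ g a₀ = e₀ := by
  have htg : ∀ a, (f a, (T e₀).2) ∈ T.target := fun a => T.mem_target.2 (hf a)
  refine ⟨⟨fun a => T.toOpenPartialHomeomorph.symm (f a, (T e₀).2), ?_⟩, fun a => ?_, ?_⟩
  · exact T.toOpenPartialHomeomorph.continuousOn_symm.comp_continuous
      (f.continuous.prodMk continuous_const) htg
  · exact T.proj_symm_apply (htg a)
  · show T.toOpenPartialHomeomorph.symm (f a₀, (T e₀).2) = e₀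
    rw [← he]
    exact T.symm_apply_mk_proj hsrc

/-- The halving map `t ↦ (t + r)/2` on the unit interval. -/
def hIv (r : ℝ) (t : I) : I := projIcc 0 1 zero_le_one ((t + r) / 2)

/-- The doubling map `t ↦ 2t - r` on the unit interval. -/
def dIv (r : ℝ) (t : I) : I := projIcc 0 1 zero_le_one (2 * t - r)

theorem continuous_hIv (r : ℝ) : Continuous (hIv r) :=
  continuous_projIcc.comp (by fun_prop)

theorem continuous_dIv (r : ℝ) : Continuous (dIv r) :=
  continuous_projIcc.comp (by fun_prop)

theorem coe_hIv {r : ℝ} (h0 : 0 ≤ r) (h1 : r ≤ 1) (t : I) : (hIv r t : ℝ) = (t + r) / 2 := by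
  have ht0 := t.2.1; have ht1 := t.2.2
  rw [hIv, projIcc_of_mem]
  constructor <;> [skip; skip] <;> linarith

theorem dist_hIv {r : ℝ} (h0 : 0 ≤ r) (h1 : r ≤ 1) (s t : I) :
    dist (hIv r s) (hIv r t) = dist s t / 2 := by
  rw [Subtype.dist_eq, Subtype.dist_eq, coe_hIv h0 h1, coe_hIv h0 h1, Real.dist_eq, Real.dist_eq]
  rw [show (↑s + r) / 2 - (↑t + r) / 2 = (↑s - ↑t) / 2 by ring, abs_div]
  simp [abs_of_nonneg]

theorem hIv_dIv₀ {t : I} (h : (t : ℝ) ≤ 1 / 2) : hIv 0 (dIv 0 t) = t := by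
  have ht0 := t.2.1
  have : dIv 0 t = ⟨2 * t - 0, by constructor <;> linarith⟩ := by
    rw [dIv, projIcc_of_mem]
    constructor <;> linarith
  rw [this]
  apply Subtype.ext
  rw [coe_hIv le_rfl zero_le_one]
  dsimp; ring

theorem hIv_dIv₁ {t : I} (h : 1 / 2 ≤ (t : ℝ)) : hIv 1 (dIv 1 t) = t := by
  have ht1 := t.2.2
  have : dIv 1 t = ⟨2 * t - 1, by constructor <;> linarith⟩ := by
    rw [dIv, projIcc_of_mem]
    constructor <;> linarith
  rw [this]
  apply Subtype.ext
  rw [coe_hIv zero_le_one le_rfl]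
  dsimp; ring

theorem dIv₀_zero : dIv 0 0 = 0 := by
  apply Subtype.ext
  rw [dIv, projIcc_of_mem zero_le_one (by norm_num : (2 : ℝ) * ((0 : I) : ℝ) - 0 ∈ Icc (0:ℝ) 1)]
  norm_num

theorem hIv₀_zero : hIv 0 0 = 0 := by
  apply Subtype.ext
  rw [coe_hIv le_rfl zero_le_one]
  norm_num

theorem hIv₀_one_eq_hIv₁_zero : hIv 0 1 = hIv 1 0 := by
  apply Subtype.ext
  rw [coe_hIv le_rfl zero_le_one, coe_hIv zero_le_one le_rfl]
  norm_num

theorem dIv₀_half {t : I} (h : (t : ℝ) = 1 / 2) : dIv 0 t = 1 := by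
  apply Subtype.ext
  have : (2 : ℝ) * t - 0 = 1 := by rw [h]; ring
  rw [dIv, this, projIcc_of_mem zero_le_one (by norm_num : (1:ℝ) ∈ Icc (0:ℝ) 1)]
  norm_num

theorem dIv₁_half {t : I} (h : (t : ℝ) = 1 / 2) : dIv 1 t = 0 := by
  apply Subtype.ext
  have : (2 : ℝ) * t - 1 = 0 := by rw [h]; ring
  rw [dIv, this, projIcc_of_mem zero_le_one (by norm_num : (0:ℝ) ∈ Icc (0:ℝ) 1)]
  norm_num


example : PreconnectedSpace I := inferInstance

/-- Glue two lifts along the second coordinate. -/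
theorem glue_snd (hp : IsCoveringMap p) (F : C(I × I, X)) (G₀ G₁ : C(I × I, E))
    (h₀ : ∀ q : I × I, p (G₀ q) = F (q.1, hIv 0 q.2))
    (h₁ : ∀ q : I × I, p (G₁ q) = F (q.1, hIv 1 q.2))
    (hmid : G₁ (0, 0) = G₀ (0, 1)) :
    ∃ G : C(I × I, E), (∀ q, p (G q) = F q) ∧ G (0, 0) = G₀ (0, 0) := by
  have hedge : (fun s : I => G₀ (s, 1)) = fun s : I => G₁ (s, 0) := by
    refine hp.eq_of_comp_eq ?_ ?_ (funext fun s => ?_) 0 hmid.symm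
    · exact G₀.continuous.comp (continuous_id.prodMk continuous_const)
    · exact G₁.continuous.comp (continuous_id.prodMk continuous_const)
    · show p (G₀ (s, 1)) = p (G₁ (s, 0))
      rw [h₀, h₁, hIv₀_one_eq_hIv₁_zero]
  have hcont : Continuous fun q : I × I =>
      if (q.2 : ℝ) ≤ 1 / 2 then G₀ (q.1, dIv 0 q.2) else G₁ (q.1, dIv 1 q.2) := by
    refine Continuous.if_le ?_ ?_ (continuous_subtype_val.comp continuous_snd)
      continuous_const fun q hq => ?_
    · exact G₀.continuous.comp (continuous_fst.prodMk ((continuous_dIv 0).comp continuous_snd))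
    · exact G₁.continuous.comp (continuous_fst.prodMk ((continuous_dIv 1).comp continuous_snd))
    · rw [dIv₀_half hq, dIv₁_half hq]
      exact congrFun hedge q.1 ▸ rfl
  refine ⟨⟨_, hcont⟩, fun q => ?_, ?_⟩
  · show p (if (q.2 : ℝ) ≤ 1 / 2 then _ else _) = F q
    split_ifs with h
    · rw [h₀, hIv_dIv₀ h]
    · rw [h₁, hIv_dIv₁ (le_of_lt (not_le.1 h))]
  · show (if ((0 : I) : ℝ) ≤ 1 / 2 then G₀ (0, dIv 0 0) else _) = G₀ (0, 0)
    rw [if_pos (by norm_num), dIv₀_zero]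

/-- Glue two lifts along the first coordinate. -/
theorem glue_fst (hp : IsCoveringMap p) (F : C(I × I, X)) (G₀ G₁ : C(I × I, E))
    (h₀ : ∀ q : I × I, p (G₀ q) = F (hIv 0 q.1, q.2))
    (h₁ : ∀ q : I × I, p (G₁ q) = F (hIv 1 q.1, q.2))
    (hmid : G₁ (0, 0) = G₀ (1, 0)) :
    ∃ G : C(I × I, E), (∀ q, p (G q) = F q) ∧ G (0, 0) = G₀ (0, 0) := by
  have hedge : (fun s : I => G₀ (1, s)) = fun s : I => G₁ (0, s) := by
    refine hp.eq_of_comp_eq ?_ ?_ (funext fun s => ?_) 0 hmid.symm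
    · exact G₀.continuous.comp (continuous_const.prodMk continuous_id)
    · exact G₁.continuous.comp (continuous_const.prodMk continuous_id)
    · show p (G₀ (1, s)) = p (G₁ (0, s))
      rw [h₀, h₁, hIv₀_one_eq_hIv₁_zero]
  have hcont : Continuous fun q : I × I =>
      if (q.1 : ℝ) ≤ 1 / 2 then G₀ (dIv 0 q.1, q.2) else G₁ (dIv 1 q.1, q.2) := by
    refine Continuous.if_le ?_ ?_ (continuous_subtype_val.comp continuous_fst)
      continuous_const fun q hq => ?_
    · exact G₀.continuous.comp (((continuous_dIv 0).comp continuous_fst).prodMk continuous_snd)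
    · exact G₁.continuous.comp (((continuous_dIv 1).comp continuous_fst).prodMk continuous_snd)
    · rw [dIv₀_half hq, dIv₁_half hq]
      exact congrFun hedge q.2 ▸ rfl
  refine ⟨⟨_, hcont⟩, fun q => ?_, ?_⟩
  · show p (if (q.1 : ℝ) ≤ 1 / 2 then _ else _) = F q
    split_ifs with h
    · rw [h₀, hIv_dIv₀ h]
    · rw [h₁, hIv_dIv₁ (le_of_lt (not_le.1 h))]
  · show (if ((0 : I) : ℝ) ≤ 1 / 2 then G₀ (dIv 0 0, 0) else _) = G₀ (0, 0)
    rw [if_pos (by norm_num), dIv₀_zero]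


/-- The reparametrization of a square map onto a dyadic quarter. -/
def quarter (F : C(I × I, X)) (i j : ℝ) : C(I × I, X) :=
  F.comp ⟨fun q => (hIv i q.1, hIv j q.2),
    ((continuous_hIv i).comp continuous_fst).prodMk ((continuous_hIv j).comp continuous_snd)⟩

theorem sq_lift_aux (hp : IsCoveringMap p) :
    ∀ (m : ℕ) (F : C(I × I, X)),
      (∀ q : I × I, ∃ (c : X) (T : Bundle.Trivialization (p ⁻¹' {c}) p),
        ∀ q' : I × I, dist q' q ≤ (1 / 2 : ℝ) ^ m → F q' ∈ T.baseSet) →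
      ∀ e₀ : E, p e₀ = F (0, 0) →
        ∃ G : C(I × I, E), (∀ q, p (G q) = F q) ∧ G (0, 0) = e₀ := by
  intro m
  induction m with
  | zero =>
    intro F hF e₀ he
    obtain ⟨c, T, hT⟩ := hF (0, 0)
    have hall : ∀ q : I × I, F q ∈ T.baseSet := by
      intro q
      refine hT q ?_
      have key01 : ∀ t : I, dist t (0 : I) ≤ 1 := by
        intro t
        rw [Subtype.dist_eq, Real.dist_eq]
        have a := t.2.1; have b := t.2.2
        have h0 : ((0 : I) : ℝ) = 0 := rfl
        rw [h0, sub_zero, abs_of_nonneg a]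
        exact b
      have h1 := key01 q.1
      have h2 := key01 q.2
      calc dist q (0, 0) = max (dist q.1 (0:I)) (dist q.2 (0:I)) := Prod.dist_eq
        _ ≤ 1 := by simpa using max_le h1 h2
    exact lift_of_subset_baseSet T F hall he (T.mem_source.2 (he ▸ hall (0, 0)))
  | succ m ih =>
    intro F hF e₀ he
    have key : ∀ (i j : ℝ), 0 ≤ i → i ≤ 1 → 0 ≤ j → j ≤ 1 →
        ∀ e : E, p e = quarter F i j (0, 0) →
        ∃ G : C(I × I, E), (∀ q, p (G q) = quarter F i j q) ∧ G (0, 0) = e := by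
      intro i j hi0 hi1 hj0 hj1 e hee
      refine ih (quarter F i j) (fun q => ?_) e hee
      obtain ⟨c, T, hT⟩ := hF (hIv i q.1, hIv j q.2)
      refine ⟨c, T, fun q' hq' => hT _ ?_⟩
      have h1 : dist q'.1 q.1 ≤ (1 / 2 : ℝ) ^ m := by
        refine le_trans ?_ hq'
        rw [Prod.dist_eq]; exact le_max_left _ _
      have h2 : dist q'.2 q.2 ≤ (1 / 2 : ℝ) ^ m := by
        refine le_trans ?_ hq'
        rw [Prod.dist_eq]; exact le_max_right _ _
      rw [Prod.dist_eq]
      refine max_le ?_ ?_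
      · show dist (hIv i q'.1) (hIv i q.1) ≤ (1 / 2 : ℝ) ^ (m + 1)
        rw [dist_hIv hi0 hi1, pow_succ]
        linarith
      · show dist (hIv j q'.2) (hIv j q.2) ≤ (1 / 2 : ℝ) ^ (m + 1)
        rw [dist_hIv hj0 hj1, pow_succ]
        linarith
    -- bottom-left quarter
    obtain ⟨G00, hG00, hG00c⟩ := key 0 0 le_rfl zero_le_one le_rfl zero_le_one e₀ (by
      show p e₀ = F (hIv 0 0, hIv 0 0)
      rw [hIv₀_zero]; exact he)
    -- top-left quarter
    obtain ⟨G01, hG01, hG01c⟩ := key 0 1 le_rfl zero_le_one zero_le_one le_rfl (G00 (0, 1)) (by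
      show p (G00 (0, 1)) = F (hIv 0 0, hIv 1 0)
      rw [hG00 (0, 1)]
      show F (hIv 0 0, hIv 0 1) = F (hIv 0 0, hIv 1 0)
      rw [hIv₀_one_eq_hIv₁_zero])
    -- left strip
    obtain ⟨Gleft, hGleft, hGleftc⟩ := glue_snd hp
      (F.comp ⟨fun q => (hIv 0 q.1, q.2),
        ((continuous_hIv 0).comp continuous_fst).prodMk continuous_snd⟩)
      G00 G01 (fun q => hG00 q) (fun q => hG01 q) (hG01c.trans rfl)
    -- bottom-right quarter
    obtain ⟨G10, hG10, hG10c⟩ := key 1 0 zero_le_one le_rfl le_rfl zero_le_one (Gleft (1, 0)) (by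
      show p (Gleft (1, 0)) = F (hIv 1 0, hIv 0 0)
      rw [hGleft (1, 0)]
      show F (hIv 0 1, 0) = F (hIv 1 0, hIv 0 0)
      rw [hIv₀_one_eq_hIv₁_zero, hIv₀_zero])
    -- top-right quarter
    obtain ⟨G11, hG11, hG11c⟩ := key 1 1 zero_le_one le_rfl zero_le_one le_rfl (G10 (0, 1)) (by
      show p (G10 (0, 1)) = F (hIv 1 0, hIv 1 0)
      rw [hG10 (0, 1)]
      show F (hIv 1 0, hIv 0 1) = F (hIv 1 0, hIv 1 0)
      rw [hIv₀_one_eq_hIv₁_zero])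
    -- right strip
    obtain ⟨Gright, hGright, hGrightc⟩ := glue_snd hp
      (F.comp ⟨fun q => (hIv 1 q.1, q.2),
        ((continuous_hIv 1).comp continuous_fst).prodMk continuous_snd⟩)
      G10 G11 (fun q => hG10 q) (fun q => hG11 q) (hG11c.trans rfl)
    obtain ⟨G, hG, hGc⟩ := glue_fst hp F Gleft Gright (fun q => hGleft q) (fun q => hGright q)
      (hGrightc.trans hG10c)
    exact ⟨G, hG, (hGc.trans hGleftc).trans hG00c⟩


/-- Any continuous map from the square into the base of a covering lifts. -/
theorem exists_sq_lift (hp : IsCoveringMap p) (F : C(I × I, X)) (e₀ : E)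
    (he : p e₀ = F (0, 0)) :
    ∃ G : C(I × I, E), (∀ q, p (G q) = F q) ∧ G (0, 0) = e₀ := by
  have hrange : ∀ q : I × I, Nonempty (p ⁻¹' {F q}) := by
    have hcl : IsClopen (F ⁻¹' Set.range p) := by
      refine ⟨?_, hp.isOpenMap.isOpen_range.preimage F.continuous⟩
      refine IsClosed.preimage F.continuous
        (isOpen_compl_iff.1 (isOpen_iff_forall_mem_open.2 fun x hx => ?_))
      obtain ⟨_, U, hxU, hU, _, H, _⟩ := hp x
      refine ⟨U, fun y hy => ?_, hU, hxU⟩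
      rintro ⟨e, rfl⟩
      exact hx ⟨(H ⟨e, hy⟩).2.1, (H ⟨e, hy⟩).2.2⟩
    have hu := hcl.eq_univ ⟨(0, 0), ⟨e₀, he⟩⟩
    intro q
    obtain ⟨e, he'⟩ : F q ∈ Set.range p := by
      rw [← Set.mem_preimage, hu]; trivial
    exact ⟨⟨e, he'⟩⟩
  have hopen : ∀ q : I × I, IsOpen (F ⁻¹' (hp (F q)).toTrivialization.baseSet) := fun q =>
    ((hp (F q)).toTrivialization.open_baseSet).preimage F.continuous
  have hcover : (univ : Set (I × I)) ⊆ ⋃ q, F ⁻¹' (hp (F q)).toTrivialization.baseSet := by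
    intro q _
    exact mem_iUnion.2 ⟨q, (hp (F q)).mem_toTrivialization_baseSet⟩
  obtain ⟨δ, hδ, hball⟩ := lebesgue_number_lemma_of_metric isCompact_univ hopen hcover
  obtain ⟨m, hm⟩ := exists_pow_lt_of_lt_one hδ (by norm_num : (1 / 2 : ℝ) < 1)
  refine sq_lift_aux hp m F (fun q => ?_) e₀ he
  obtain ⟨i, hi⟩ := hball q (mem_univ q)
  exact ⟨F i, (hp (F i)).toTrivialization, fun q' hq' =>
    hi (Metric.mem_ball.2 (lt_of_le_of_lt hq' hm))⟩

/-- Path lifting for covering maps. -/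
theorem exists_path_lift (hp : IsCoveringMap p) {a b : X} (γ : Path a b) (e₀ : E)
    (he : p e₀ = a) :
    ∃ (e₁ : E) (L : Path e₀ e₁), ∀ t, p (L t) = γ t := by
  obtain ⟨G, hG, hGc⟩ := exists_sq_lift hp
    (⟨fun q => γ q.2, γ.continuous.comp continuous_snd⟩ : C(I × I, X)) e₀
    (by simpa using he)
  refine ⟨G (0, 1), ⟨⟨fun t => G (0, t),
    G.continuous.comp (continuous_const.prodMk continuous_id)⟩, hGc, rfl⟩, fun t => ?_⟩
  exact hG (0, t)

/-- Monodromy: a homotopy of paths downstairs lifts along a given lift of the source path. -/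
theorem monodromy (hp : IsCoveringMap p) {a b : X} {γ₀ γ₁ : Path a b}
    (h : γ₀.Homotopic γ₁) {e₀ e₁ : E} (L₀ : Path e₀ e₁) (hL₀ : ∀ t, p (L₀ t) = γ₀ t) :
    ∃ L₁ : Path e₀ e₁, (∀ t, p (L₁ t) = γ₁ t) ∧ L₀.Homotopic L₁ := by
  obtain ⟨H⟩ := h
  obtain ⟨G, hG, hGc⟩ := exists_sq_lift hp H.toContinuousMap e₀
    (by
      show p e₀ = H (0, 0)
      rw [H.apply_zero]
      show p e₀ = γ₀ 0
      rw [← hL₀ 0, L₀.source])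
  -- the bottom edge is constant
  have hbot : ∀ s : I, G (s, 0) = e₀ := by
    intro s
    have hc : ∀ s s' : I, p (G (s, 0)) = p (G (s', 0)) := by
      intro s s'
      rw [hG, hG]
      show H (s, 0) = H (s', 0)
      rw [H.source, H.source]
    have := hp.const_of_comp (g := fun s : I => G (s, 0))
      (G.continuous.comp (continuous_id.prodMk continuous_const)) hc s 0
    exact this.trans hGc
  -- the top edge is constant
  have htop : ∀ s : I, G (s, 1) = G (0, 1) := by
    intro s
    have hc : ∀ s s' : I, p (G (s, 1)) = p (G (s', 1)) := by
      intro s s'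
      rw [hG, hG]
      show H (s, 1) = H (s', 1)
      rw [H.target, H.target]
    exact hp.const_of_comp (g := fun s : I => G (s, 1))
      (G.continuous.comp (continuous_id.prodMk continuous_const)) hc s 0
  -- the left edge is L₀
  have hleft : (fun t : I => G (0, t)) = fun t => L₀ t := by
    refine hp.eq_of_comp_eq (G.continuous.comp (continuous_const.prodMk continuous_id))
      L₀.continuous (funext fun t => ?_) 0 (by rw [hbot 0, L₀.source])
    show p (G (0, t)) = p (L₀ t)
    rw [hG, hL₀]
    exact H.apply_zero t
  have hG01 : G (0, 1) = e₁ := by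
    have := congrFun hleft 1
    rwa [L₀.target] at this
  refine ⟨⟨⟨fun t => G (1, t),
      G.continuous.comp (continuous_const.prodMk continuous_id)⟩, hbot 1, (htop 1).trans hG01⟩,
    fun t => ?_, ?_⟩
  · show p (G (1, t)) = γ₁ t
    rw [hG]
    exact H.apply_one t
  · refine ⟨{
      toFun := fun q => G q
      continuous_toFun := G.continuous
      map_zero_left := fun t => congrFun hleft t
      map_one_left := fun t => rfl
      prop' := by
        intro s t ht
        rcases ht with h0 | h1
        · subst h0
          show G (s, 0) = L₀ 0
          rw [hbot s, L₀.source]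
        · rcases h1 with rfl
          show G (s, 1) = L₀ 1
          rw [htop s, hG01, L₀.target] }⟩


end CoveringLiftAux

/-- A loop `β` based at `y` is a *small loop* if it is homotopic (rel endpoints) to a loop
contained in every open neighborhood of `y`. -/
def IsSmallLoop {X : TopCat} {y : X} (β : Path y y) : Prop :=
  ∀ U : Set X, IsOpen U → y ∈ U →
    ∃ β' : Path y y, (∀ t, β' t ∈ U) ∧ Path.Homotopic β β'

/-- The small loop group `π₁ˢ(X, x)`: the set of homotopy classes of small loops at `x`. -/
def smallLoopSet {X : TopCat} (x : X) : Set (FundamentalGroup X x) :=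
  {g | ∃ β : Path x x, IsSmallLoop β ∧ g = fromPath ⟦β⟧}

/-- The SG subgroup `π₁ˢᵍ(X, x)`: generated by conjugates of small loop classes along paths. -/
def sgSubgroup {X : TopCat} (x : X) : Subgroup (FundamentalGroup X x) :=
  Subgroup.closure {g | ∃ (y : X) (α : Path x y) (β : Path y y),
    IsSmallLoop β ∧ g = fromPath ⟦α.trans (β.trans α.symm)⟧}

/-- The quotient topology on the fundamental group, coinduced from the loop space
(with the compact-open topology). -/
def qtop {X : TopCat} (x : X) : TopologicalSpace (FundamentalGroup X x) :=
  TopologicalSpace.coinduced (fun β : Path x x => fromPath ⟦β⟧) inferInstance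

theorem IsSmallLoop.map {X Y : TopCat} {f : X → Y} (hf : Continuous f) {y : X} {β : Path y y}
    (hβ : IsSmallLoop β) : IsSmallLoop (β.map hf) := by
  intro U hU hyU
  obtain ⟨β', hmem, hhom⟩ := hβ (f ⁻¹' U) (hU.preimage hf) hyU
  exact ⟨β'.map hf, fun t => hmem t, hhom.map ⟨f, hf⟩⟩

theorem IsCoveringMap.exists_small_loop_lift {E X : TopCat} {p : E → X}
    (hp : IsCoveringMap p) (ye : E) (β : Path (p ye) (p ye)) (hβ : IsSmallLoop β) :
    ∃ β' : Path ye ye, (∀ t, p (β' t) = β t) ∧ IsSmallLoop β' := by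
  haveI := (hp (p ye)).1
  haveI : Nonempty (p ⁻¹' {p ye}) := ⟨⟨ye, rfl⟩⟩
  set T := (hp (p ye)).toTrivialization with hT
  have hyb : p ye ∈ T.baseSet := (hp (p ye)).mem_toTrivialization_baseSet
  have hsrc : ye ∈ T.source := T.mem_source.2 hyb
  set i := (T ye).2 with hi
  set V : Set E := T.source ∩ (Prod.snd ∘ T) ⁻¹' {i} with hV
  have hVopen : IsOpen V := T.continuousOn_toFun.isOpen_inter_preimage T.open_source
    (continuous_snd.isOpen_preimage _ (isOpen_discrete _))
  have hyV : ye ∈ V := ⟨hsrc, rfl⟩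
  have claim : ∀ W : Set E, IsOpen W → ye ∈ W →
      ∃ (M : Path ye ye) (β'' : Path (p ye) (p ye)),
        (∀ t, M t ∈ W) ∧ (∀ t, p (M t) = β'' t) ∧ β.Homotopic β'' := by
    intro W hWopen hyW
    have hO : IsOpen (p '' (V ∩ W)) := hp.isOpenMap _ (hVopen.inter hWopen)
    have hyO : p ye ∈ p '' (V ∩ W) := ⟨ye, ⟨hyV, hyW⟩, rfl⟩
    obtain ⟨β'', hmem, hhom⟩ := hβ _ hO hyO
    have hbase : ∀ t, β'' t ∈ T.baseSet := by
      intro t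
      obtain ⟨e, ⟨⟨hes, _⟩, _⟩, hpe⟩ := hmem t
      rw [← hpe]
      exact T.mem_source.1 hes
    have htg : ∀ t, ((β'' t : X), i) ∈ T.target := fun t => T.mem_target.2 (hbase t)
    have hMeq : ∀ t, ∃ e ∈ W, T.toOpenPartialHomeomorph.symm ((β'' t : X), i) = e := by
      intro t
      obtain ⟨e, heVW, hpe⟩ := hmem t
      have h2 : (T e).2 = i := heVW.1.2
      have h3 : T e = ((β'' t : X), i) := by
        rw [← T.mk_proj_snd heVW.1.1, h2, hpe]
      refine ⟨e, heVW.2, ?_⟩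
      rw [← h3]
      exact T.toOpenPartialHomeomorph.left_inv heVW.1.1
    have hcont : Continuous fun t : unitInterval =>
        T.toOpenPartialHomeomorph.symm ((β'' t : X), i) :=
      T.toOpenPartialHomeomorph.continuousOn_symm.comp_continuous
        (β''.continuous.prodMk continuous_const) htg
    have hM0 : T.toOpenPartialHomeomorph.symm ((β'' 0 : X), i) = ye := by
      rw [β''.source, hi]
      exact T.symm_apply_mk_proj hsrc
    have hM1 : T.toOpenPartialHomeomorph.symm ((β'' 1 : X), i) = ye := by
      rw [β''.target, hi]
      exact T.symm_apply_mk_proj hsrc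
    refine ⟨⟨⟨_, hcont⟩, hM0, hM1⟩, β'', fun t => ?_, fun t => ?_, hhom⟩
    · obtain ⟨e, heW, hee⟩ := hMeq t
      show T.toOpenPartialHomeomorph.symm ((β'' t : X), i) ∈ W
      rw [hee]; exact heW
    · exact T.proj_symm_apply (htg t)
  obtain ⟨Mu, βu, _, hpMu, hhomu⟩ := claim Set.univ isOpen_univ (Set.mem_univ _)
  obtain ⟨β₁, hpβ₁, _⟩ := _root_.monodromy hp hhomu.symm Mu hpMu
  refine ⟨β₁, hpβ₁, ?_⟩
  intro W hWopen hyW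
  obtain ⟨M, β'', hMW, hpM, hhom⟩ := claim W hWopen hyW
  obtain ⟨L₁, hpL₁, hML₁⟩ := _root_.monodromy hp hhom.symm M hpM
  have hLe : L₁ = β₁ := by
    apply Path.ext
    have : (fun t => L₁ t) = fun t => β₁ t := by
      refine hp.eq_of_comp_eq L₁.continuous β₁.continuous (funext fun t => ?_) 0
        (by rw [L₁.source, β₁.source])
      show p (L₁ t) = p (β₁ t)
      rw [hpL₁, hpβ₁]
    exact this
  exact ⟨M, hMW, Path.Homotopic.symm (hLe ▸ hML₁)⟩

open CategoryTheory

/-- `mapFn` commutes with composition of homotopy classes of paths. -/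
theorem mapFn_comp {E X : TopCat} (f : C(E, X)) {x₀ x₁ x₂ : E}
    (q₁ : Path.Homotopic.Quotient x₀ x₁) (q₂ : Path.Homotopic.Quotient x₁ x₂) :
    Path.Homotopic.Quotient.map (q₁.trans q₂) f =
      (Path.Homotopic.Quotient.map q₁ f).trans (Path.Homotopic.Quotient.map q₂ f) := by
  refine Quotient.inductionOn₂ q₁ q₂ fun a b => ?_
  show Quotient.mk _ ((a.trans b).map f.continuous) =
    Quotient.mk _ ((a.map f.continuous).trans (b.map f.continuous))
  rw [Path.map_trans]

/-- The induced homomorphism on fundamental groups. -/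
def indHom {E X : TopCat} (f : C(E, X)) (x₀ : E) :
    FundamentalGroup E x₀ →* FundamentalGroup X (f x₀) where
  toFun g := fromPath (Path.Homotopic.Quotient.map (toPath g) f)
  map_one' := by
    show Path.Homotopic.Quotient.map
      (⟦Path.refl x₀⟧ : Path.Homotopic.Quotient x₀ x₀) f = ⟦Path.refl (f x₀)⟧
    show Quotient.mk _ ((Path.refl x₀).map f.continuous) = _
    exact congrArg _ (Path.ext rfl)
  map_mul' g h := by
    show Path.Homotopic.Quotient.map ((toPath h).trans (toPath g)) f =
      (Path.Homotopic.Quotient.map (toPath h) f).trans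
        (Path.Homotopic.Quotient.map (toPath g) f)
    rw [mapFn_comp]

theorem indHom_fromPath {E X : TopCat} (f : C(E, X)) (x₀ : E) (γ : Path x₀ x₀) :
    indHom f x₀ (fromPath ⟦γ⟧) = fromPath ⟦γ.map f.continuous⟧ := by
  show Path.Homotopic.Quotient.map (⟦γ⟧ : Path.Homotopic.Quotient x₀ x₀) f =
    ⟦γ.map f.continuous⟧
  rfl


/-- A covering map `p : (X̃, x₀) → (X, x)` maps the SG subgroup of `X̃` onto the SG subgroup
of `X`: `p₊(π₁ˢᵍ(X̃, x₀)) = π₁ˢᵍ(X, x)`. -/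
theorem image_sgSubgroup_of_covering {E X : TopCat} (p : E → X) (hp : IsCoveringMap p)
    (x₀ : E) :
    (fun g : FundamentalGroup E x₀ =>
        fromPath (Path.Homotopic.Quotient.map (toPath g) ⟨p, hp.continuous⟩)) ''
      (sgSubgroup x₀ : Set (FundamentalGroup E x₀)) =
      (sgSubgroup (p x₀) : Set (FundamentalGroup X (p x₀))) := by
  set pc : C(E, X) := ⟨p, hp.continuous⟩ with hpc
  have hfun : (fun g : FundamentalGroup E x₀ =>
      fromPath (Path.Homotopic.Quotient.map (toPath g) pc)) = ⇑(indHom pc x₀) := by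
    funext g
    rfl
  rw [hfun]
  have himg : ⇑(indHom pc x₀) '' {g : FundamentalGroup E x₀ |
        ∃ (y : E) (α : Path x₀ y) (β : Path y y),
          IsSmallLoop β ∧ g = fromPath ⟦α.trans (β.trans α.symm)⟧} =
      {g : FundamentalGroup X (p x₀) | ∃ (y : X) (α : Path (p x₀) y) (β : Path y y),
          IsSmallLoop β ∧ g = fromPath ⟦α.trans (β.trans α.symm)⟧} := by
    ext g
    simp only [Set.mem_image, Set.mem_setOf_eq]
    constructor
    · rintro ⟨g', ⟨ye, A, B, hB, rfl⟩, rfl⟩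
      refine ⟨pc ye, A.map pc.continuous, B.map pc.continuous, hB.map pc.continuous, ?_⟩
      rw [indHom_fromPath]
      have hmt : (A.trans (B.trans A.symm)).map pc.continuous =
          (A.map pc.continuous).trans ((B.map pc.continuous).trans (A.map pc.continuous).symm) := by
        rw [Path.map_trans, Path.map_trans, Path.map_symm]
      rw [hmt]
      rfl
    · rintro ⟨y, α, β, hβ, rfl⟩
      obtain ⟨ye, A, hA⟩ := exists_path_lift hp α x₀ rfl
      have hy : p ye = y := by
        rw [← A.target, hA 1, α.target]
      subst hy
      obtain ⟨B, hB, hBsmall⟩ := hp.exists_small_loop_lift ye β hβ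
      have hkey : (A.trans (B.trans A.symm)).map pc.continuous =
          α.trans (β.trans α.symm) := by
        apply Path.ext
        funext t
        show p ((A.trans (B.trans A.symm)) t) = (α.trans (β.trans α.symm)) t
        rw [Path.trans_apply, Path.trans_apply]
        split_ifs with h
        · exact hA _
        · rw [Path.trans_apply, Path.trans_apply]
          split_ifs with h2
          · exact hB _
          · show p (A.symm _) = α.symm _
            rw [Path.symm_apply, Path.symm_apply]
            exact hA _
      exact ⟨fromPath ⟦A.trans (B.trans A.symm)⟧, ⟨ye, A, B, hBsmall, rfl⟩,
        by rw [indHom_fromPath, hkey]; rfl⟩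
  calc ⇑(indHom pc x₀) '' ↑(sgSubgroup x₀)
      = ↑((sgSubgroup x₀).map (indHom pc x₀)) := by rw [Subgroup.coe_map]
    _ = ↑(sgSubgroup (p x₀)) := by
        rw [sgSubgroup, sgSubgroup, MonoidHom.map_closure, himg]
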